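/- For a regular cardinal κ and a cardinal θ ≥ κ, the Baire number 𝔫_κ^θ of the space (2^θ)_κ satisfies κ⁺ ≤ 𝔫_κ^θ ≤ 2^κ. -/

import Mathlib

open Cardinal Set

universe u

/-- `ExtFn q p` : the partial function `q` extends `p`. -/
def ExtFn {θ : Type u} (q p : θ → Option Bool) : Prop :=
  ∀ x b, p x = some b → q x = some b

/-- `Fn κ θ` : partial functions `θ → 2` of size `< κ`. -/
def Fn (κ : Cardinal.{u}) (θ : Type u) : Set (θ → Option Bool) :=
  {p | #{x | p x ≠ none} < κ}

/-- The basic open set determined by a condition `p`. -/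
def cylinder {θ : Type u} (p : θ → Option Bool) : Set (θ → Bool) :=
  {f | ∀ x b, p x = some b → f x = b}

/-- The topology of the space `(2^θ)_κ`. -/
def kTop (κ : Cardinal.{u}) (θ : Type u) : TopologicalSpace (θ → Bool) :=
  TopologicalSpace.generateFrom {U | ∃ p ∈ Fn κ θ, U = cylinder p}

/-- The Baire number of the space `(2^θ)_κ` : the least cardinality of a family of
dense open sets with empty intersection. -/
noncomputable def spaceBaire (κ : Cardinal.{u}) (θ : Type u) : Cardinal.{u} :=
  sInf {c | ∃ F : Set (Set (θ → Bool)), #F = c ∧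
    (∀ U ∈ F, @IsOpen _ (kTop κ θ) U ∧ @Dense _ (kTop κ θ) U) ∧ ⋂₀ F = ∅}

/-- `𝔫_κ^θ` for cardinals `κ ≤ θ`. -/
noncomputable def nBaire (κ θ : Cardinal.{u}) : Cardinal.{u} :=
  spaceBaire κ θ.out

section Basic

variable {T : Type u} {κ : Cardinal.{u}}

theorem extFn_refl (p : T → Option Bool) : ExtFn p p := fun _ _ h => h

theorem extFn_trans {p q r : T → Option Bool} (h1 : ExtFn q p) (h2 : ExtFn r q) :
    ExtFn r p := fun x b hb => h2 x b (h1 x b hb)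

theorem mem_cylinder_of_extFn {p q : T → Option Bool} (h : ExtFn q p) :
    cylinder q ⊆ cylinder p := fun f hf x b hb => hf x b (h x b hb)

open Classical in
/-- restriction of `f` to the union of the domains of `p` and `q` -/
noncomputable def restr2 (f : T → Bool) (p q : T → Option Bool) : T → Option Bool :=
  fun x => if p x = none ∧ q x = none then none else some (f x)

theorem restr2_mem_Fn (hκ : ℵ₀ ≤ κ) (f : T → Bool) {p q : T → Option Bool}
    (hp : p ∈ Fn κ T) (hq : q ∈ Fn κ T) : restr2 f p q ∈ Fn κ T := by
  have hsub : {x | restr2 f p q x ≠ none} ⊆ {x | p x ≠ none} ∪ {x | q x ≠ none} := by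
    intro x hx
    by_contra hc
    simp only [mem_union, mem_setOf_eq, not_or, not_not] at hc
    exact hx (by simp [restr2, hc.1, hc.2])
  calc #{x | restr2 f p q x ≠ none} ≤ #({x | p x ≠ none} ∪ {x | q x ≠ none} : Set T) :=
        mk_le_mk_of_subset hsub
    _ ≤ #{x | p x ≠ none} + #{x | q x ≠ none} := mk_union_le _ _
    _ < κ := add_lt_of_lt hκ hp hq

theorem mem_cyl_restr2 (f : T → Bool) (p q : T → Option Bool) :
    f ∈ cylinder (restr2 f p q) := by
  intro x b hb
  simp only [restr2] at hb
  split at hb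
  · exact absurd hb (by simp)
  · exact (Option.some_injective _ hb)

theorem restr2_subset_left {f : T → Bool} {p : T → Option Bool} (q : T → Option Bool)
    (hf : f ∈ cylinder p) : cylinder (restr2 f p q) ⊆ cylinder p := by
  apply mem_cylinder_of_extFn
  intro x b hb
  have h1 : f x = b := hf x b hb
  simp [restr2, hb, h1]

theorem restr2_subset_right {f : T → Bool} (p : T → Option Bool) {q : T → Option Bool}
    (hf : f ∈ cylinder q) : cylinder (restr2 f p q) ⊆ cylinder q := by
  apply mem_cylinder_of_extFn
  intro x b hb
  have h1 : f x = b := hf x b hb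
  simp [restr2, hb, h1]

theorem const_none_mem_Fn (hκ : ℵ₀ ≤ κ) : (fun _ : T => none) ∈ Fn κ T := by
  simp only [Fn, mem_setOf_eq, ne_eq, not_true_eq_false]
  simpa using aleph0_pos.trans_le hκ

theorem isOpen_kTop_iff (hκ : ℵ₀ ≤ κ) {U : Set (T → Bool)} :
    @IsOpen _ (kTop κ T) U ↔ ∀ f ∈ U, ∃ p ∈ Fn κ T, f ∈ cylinder p ∧ cylinder p ⊆ U := by
  letI := kTop κ T
  constructor
  · intro h
    change TopologicalSpace.GenerateOpen _ U at h
    induction h with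
    | basic V hV =>
      obtain ⟨p, hp, rfl⟩ := hV
      exact fun f hf => ⟨p, hp, hf, subset_rfl⟩
    | univ =>
      intro f _
      exact ⟨fun _ => none, const_none_mem_Fn hκ, by intro x b hb; simp at hb, subset_univ _⟩
    | inter V W _ _ ihV ihW =>
      intro f hf
      obtain ⟨p, hp, hfp, hpV⟩ := ihV f hf.1
      obtain ⟨q, hq, hfq, hqW⟩ := ihW f hf.2
      exact ⟨restr2 f p q, restr2_mem_Fn hκ f hp hq, mem_cyl_restr2 f p q,
        subset_inter ((restr2_subset_left q hfp).trans hpV)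
          ((restr2_subset_right p hfq).trans hqW)⟩
    | sUnion S _ ih =>
      intro f hf
      obtain ⟨s, hs, hfs⟩ := hf
      obtain ⟨p, hp, hfp, hps⟩ := ih s hs f hfs
      exact ⟨p, hp, hfp, hps.trans (subset_sUnion_of_mem hs)⟩
  · intro h
    have : U = ⋃ f : U, cylinder (Classical.choose (h f f.2)) := by
      ext g
      constructor
      · intro hg
        exact mem_iUnion.2 ⟨⟨g, hg⟩, (Classical.choose_spec (h g hg)).2.1⟩
      · intro hg
        obtain ⟨f, hf⟩ := mem_iUnion.1 hg
        exact (Classical.choose_spec (h f f.2)).2.2 hf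
    rw [this]
    refine isOpen_iUnion (fun f => ?_)
    exact TopologicalSpace.GenerateOpen.basic _
      ⟨_, (Classical.choose_spec (h f f.2)).1, rfl⟩

end Basic

section Dense

variable {T : Type u} {κ : Cardinal.{u}}

theorem cylinder_nonempty (p : T → Option Bool) : (cylinder p).Nonempty := by
  refine ⟨fun x => (p x).getD false, fun x b hb => by simp [hb]⟩

theorem exists_ext_dense (hκ : ℵ₀ ≤ κ) {D : Set (T → Bool)}
    (hDo : @IsOpen _ (kTop κ T) D) (hDd : @Dense _ (kTop κ T) D)
    {q : T → Option Bool} (hq : q ∈ Fn κ T) :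
    ∃ p ∈ Fn κ T, ExtFn p q ∧ cylinder p ⊆ D := by
  letI := kTop κ T
  have hop : IsOpen (cylinder q) :=
    TopologicalSpace.GenerateOpen.basic _ ⟨q, hq, rfl⟩
  obtain ⟨f, hfD, hfq⟩ := hDd.exists_mem_open hop (cylinder_nonempty q)
  obtain ⟨p, hp, hfp, hpD⟩ := (isOpen_kTop_iff hκ).1 hDo f hfD
  refine ⟨restr2 f p q, restr2_mem_Fn hκ f hp hq, ?_, (restr2_subset_left q hfp).trans hpD⟩
  intro x b hb
  have : f x = b := hfq x b hb
  simp [restr2, hb, this]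

open Classical in
/-- Extend `q` to a condition deciding membership in `D` if possible. -/
noncomputable def extCond (κ : Cardinal.{u}) (D : Set (T → Bool)) (q : T → Option Bool) :
    T → Option Bool :=
  if h : ∃ p, p ∈ Fn κ T ∧ ExtFn p q ∧ cylinder p ⊆ D then h.choose else q

theorem extCond_spec {D : Set (T → Bool)} {q : T → Option Bool}
    (h : ∃ p, p ∈ Fn κ T ∧ ExtFn p q ∧ cylinder p ⊆ D) :
    extCond κ D q ∈ Fn κ T ∧ ExtFn (extCond κ D q) q ∧ cylinder (extCond κ D q) ⊆ D := by
  classical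
  rw [extCond]
  rw [dif_pos h]
  exact h.choose_spec

open Classical in
/-- Merge of a transfinite chain of conditions below `o`. -/
noncomputable def mergeA (p : Ordinal.{u} → T → Option Bool) (o : Ordinal.{u}) :
    T → Option Bool :=
  fun x => if h : ∃ b, ∃ o', ∃ _ : o' < o, p o' x = some b then some h.choose else none

theorem mergeA_some {p : Ordinal.{u} → T → Option Bool} {o : Ordinal.{u}} {x : T} {b : Bool}
    (h : mergeA p o x = some b) : ∃ o', ∃ _ : o' < o, p o' x = some b := by
  rw [mergeA] at h
  split at h
  · rename_i hex
    obtain ⟨o', ho', hb⟩ := hex.choose_spec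
    cases h
    exact ⟨o', ho', hb⟩
  · exact absurd h (by simp)

theorem mergeA_of_consistent {p : Ordinal.{u} → T → Option Bool} {o : Ordinal.{u}}
    (hc : ∀ o1 o2, o1 < o → o2 < o → ∀ x b1 b2, p o1 x = some b1 → p o2 x = some b2 → b1 = b2)
    {o' : Ordinal.{u}} (ho' : o' < o) : ExtFn (mergeA p o) (p o') := by
  intro x b hb
  have hex : ∃ b, ∃ o'', ∃ _ : o'' < o, p o'' x = some b := ⟨b, o', ho', hb⟩
  rw [mergeA, dif_pos hex]
  obtain ⟨o'', ho'', hb'⟩ := hex.choose_spec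
  rw [hc o'' o' ho'' ho' x _ _ hb' hb]

theorem mergeA_dom {p : Ordinal.{u} → T → Option Bool} {o : Ordinal.{u}} :
    {x | mergeA p o x ≠ none} ⊆
      ⋃ t : o.ToType, {x | p ((Ordinal.ToType.mk (o := o)).symm t).1 x ≠ none} := by
  intro x hx
  obtain ⟨b, hb⟩ := Option.ne_none_iff_exists'.1 hx
  obtain ⟨o', ho', hb'⟩ := mergeA_some hb
  refine mem_iUnion.2 ⟨Ordinal.ToType.mk (o := o) ⟨o', ho'⟩, ?_⟩
  simp only [mem_setOf_eq, OrderIso.symm_apply_apply]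
  simp [hb']

theorem mergeA_mem_Fn (hreg : κ.IsRegular) {p : Ordinal.{u} → T → Option Bool}
    {o : Ordinal.{u}} (ho : o < κ.ord) (hp : ∀ o' < o, p o' ∈ Fn κ T) :
    mergeA p o ∈ Fn κ T := by
  have hcard : #o.ToType < κ := by rw [Cardinal.mk_toType]; exact Cardinal.lt_ord.1 (ho.trans_le le_rfl) |>.trans_le le_rfl
  calc #{x | mergeA p o x ≠ none}
      ≤ #(⋃ t : o.ToType, {x | p ((Ordinal.ToType.mk (o := o)).symm t).1 x ≠ none}) :=
        mk_le_mk_of_subset mergeA_dom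
    _ ≤ Cardinal.sum fun t : o.ToType => #{x | p ((Ordinal.ToType.mk (o := o)).symm t).1 x ≠ none} :=
        mk_iUnion_le_sum_mk
    _ < κ := Cardinal.sum_lt_of_isRegular hreg hcard
        (fun t => hp _ ((Ordinal.ToType.mk (o := o)).symm t).2)

end Dense

section Generic

variable {T : Type u} {κ : Cardinal.{u}}

open Classical in
/-- The generic sequence of conditions hitting the dense sets `e o`. -/
noncomputable def gseq (κ : Cardinal.{u}) (e : Ordinal.{u} → Set (T → Bool)) :
    Ordinal.{u} → T → Option Bool :=
  Ordinal.lt_wf.fix fun o ih =>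
    extCond κ (e o)
      (fun x => if h : ∃ b, ∃ o', ∃ ho' : o' < o, ih o' ho' x = some b then some h.choose else none)

theorem gseq_eq (e : Ordinal.{u} → Set (T → Bool)) (o : Ordinal.{u}) :
    gseq κ e o = extCond κ (e o) (mergeA (gseq κ e) o) := by
  rw [gseq, WellFounded.fix_eq]
  rfl

theorem gseq_props (hreg : κ.IsRegular) {e : Ordinal.{u} → Set (T → Bool)}
    (he : ∀ o < κ.ord, @IsOpen _ (kTop κ T) (e o) ∧ @Dense _ (kTop κ T) (e o)) :
    ∀ o < κ.ord, gseq κ e o ∈ Fn κ T ∧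
      (∀ o' ≤ o, ExtFn (gseq κ e o) (gseq κ e o')) ∧
      cylinder (gseq κ e o) ⊆ e o := by
  intro o
  induction o using Ordinal.induction with
  | h o IH =>
    intro ho
    have hcons : ∀ o1 o2, o1 < o → o2 < o → ∀ x b1 b2,
        gseq κ e o1 x = some b1 → gseq κ e o2 x = some b2 → b1 = b2 := by
      intro o1 o2 h1 h2 x b1 b2 hb1 hb2
      rcases le_total o1 o2 with h | h
      · have := (IH o2 h2 (h2.trans ho)).2.1 o1 h x b1 hb1
        rw [this] at hb2; exact Option.some_injective _ hb2
      · have := (IH o1 h1 (h1.trans ho)).2.1 o2 h x b2 hb2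
        rw [this] at hb1; exact (Option.some_injective _ hb1).symm
    have hm : mergeA (gseq κ e) o ∈ Fn κ T :=
      mergeA_mem_Fn hreg ho (fun o' ho' => (IH o' ho' (ho'.trans ho)).1)
    have hspec := extCond_spec (D := e o) (q := mergeA (gseq κ e) o)
      (exists_ext_dense hreg.aleph0_le (he o ho).1 (he o ho).2 hm)
    rw [← gseq_eq] at hspec
    refine ⟨hspec.1, ?_, hspec.2.2⟩
    intro o' ho'
    rcases eq_or_lt_of_le ho' with rfl | ho'
    · exact extFn_refl _
    · exact extFn_trans (mergeA_of_consistent hcons ho') hspec.2.1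

open Classical in
theorem inter_nonempty (hreg : κ.IsRegular) (hT : Nonempty T)
    (F : Set (Set (T → Bool))) (hF : #F ≤ κ)
    (hdo : ∀ U ∈ F, @IsOpen _ (kTop κ T) U ∧ @Dense _ (kTop κ T) U) :
    (⋂₀ F).Nonempty := by
  rcases F.eq_empty_or_nonempty with rfl | ⟨U0, hU0⟩
  · simp only [sInter_empty]
    exact ⟨fun _ => false, mem_univ _⟩
  -- build an enumeration of `F` by ordinals below `κ.ord`
  have hle : #F ≤ #κ.ord.ToType := by rwa [Cardinal.mk_ord_toType]
  obtain ⟨j⟩ := (Cardinal.le_def _ _).1 hle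
  set g : κ.ord.ToType → Set (T → Bool) := fun t =>
    if h : ∃ V : F, j V = t then (h.choose : Set (T → Bool)) else U0 with hg
  have hgF : ∀ t, g t ∈ F := by
    intro t
    rw [hg]; dsimp only
    split
    · rename_i h; exact h.choose.2
    · exact hU0
  have hgj : ∀ V : F, g (j V) = (V : Set (T → Bool)) := by
    intro V
    have h : ∃ W : F, j W = j V := ⟨V, rfl⟩
    rw [hg]; dsimp only
    rw [dif_pos h]
    have := j.injective h.choose_spec
    rw [this]
  set e : Ordinal.{u} → Set (T → Bool) := fun o =>
    if h : o < κ.ord then g (Ordinal.ToType.mk (o := κ.ord) ⟨o, h⟩) else univ with he'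
  have heF : ∀ o < κ.ord, e o ∈ F := by
    intro o ho
    rw [he']; dsimp only; rw [dif_pos ho]; exact hgF _
  have he : ∀ o < κ.ord, @IsOpen _ (kTop κ T) (e o) ∧ @Dense _ (kTop κ T) (e o) :=
    fun o ho => hdo _ (heF o ho)
  have hprops := gseq_props hreg he
  -- global consistency
  have hcons : ∀ o1 o2, o1 < κ.ord → o2 < κ.ord → ∀ x b1 b2,
      gseq κ e o1 x = some b1 → gseq κ e o2 x = some b2 → b1 = b2 := by
    intro o1 o2 h1 h2 x b1 b2 hb1 hb2
    rcases le_total o1 o2 with h | h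
    · have := (hprops o2 h2).2.1 o1 h x b1 hb1
      rw [this] at hb2; exact Option.some_injective _ hb2
    · have := (hprops o1 h1).2.1 o2 h x b2 hb2
      rw [this] at hb1; exact (Option.some_injective _ hb1).symm
  set f : T → Bool := fun x => (mergeA (gseq κ e) κ.ord x).getD false with hf
  have hfcyl : ∀ o < κ.ord, f ∈ cylinder (gseq κ e o) := by
    intro o ho x b hb
    have : mergeA (gseq κ e) κ.ord x = some b :=
      mergeA_of_consistent hcons ho x b hb
    rw [hf]; dsimp only; rw [this]; rfl
  refine ⟨f, ?_⟩
  intro V hV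
  have : V = e ((Ordinal.ToType.mk (o := κ.ord)).symm (j ⟨V, hV⟩)).1 := by
    rw [he']; dsimp only
    have hlt : (((Ordinal.ToType.mk (o := κ.ord)).symm (j ⟨V, hV⟩)).1 : Ordinal) < κ.ord :=
      ((Ordinal.ToType.mk (o := κ.ord)).symm (j ⟨V, hV⟩)).2
    rw [dif_pos hlt]
    have : (⟨((Ordinal.ToType.mk (o := κ.ord)).symm (j ⟨V, hV⟩)).1,
        ((Ordinal.ToType.mk (o := κ.ord)).symm (j ⟨V, hV⟩)).2⟩ : Set.Iio κ.ord) =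
        (Ordinal.ToType.mk (o := κ.ord)).symm (j ⟨V, hV⟩) := rfl
    rw [this, OrderIso.apply_symm_apply]
    exact (hgj ⟨V, hV⟩).symm
  rw [this]
  set o := ((Ordinal.ToType.mk (o := κ.ord)).symm (j ⟨V, hV⟩)).1
  have ho : o < κ.ord := ((Ordinal.ToType.mk (o := κ.ord)).symm (j ⟨V, hV⟩)).2
  exact (hprops o ho).2.2 (hfcyl o ho)

end Generic

section Upper

variable {T : Type u} {κ : Cardinal.{u}}

open Classical in
noncomputable def single (em : κ.out ↪ T) (a : κ.out) (b : Bool) : T → Option Bool :=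
  fun x => if x = em a then some b else none

theorem single_mem_Fn (hκ : ℵ₀ ≤ κ) (em : κ.out ↪ T) (a : κ.out) (b : Bool) :
    single em a b ∈ Fn κ T := by
  have hsub : {x | single em a b x ≠ none} ⊆ {em a} := by
    intro x hx
    by_contra hne
    rw [mem_singleton_iff] at hne
    exact hx (by simp [single, hne])
  calc #{x | single em a b x ≠ none} ≤ #({em a} : Set T) := mk_le_mk_of_subset hsub
    _ = 1 := mk_singleton _
    _ < ℵ₀ := one_lt_aleph0
    _ ≤ κ := hκ

/-- the dense open set of functions disagreeing with `g` somewhere on the copy of `κ` -/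
def Dg (em : κ.out ↪ T) (g : κ.out → Bool) : Set (T → Bool) :=
  ⋃ a : κ.out, cylinder (single em a (!g a))

theorem mem_Dg {em : κ.out ↪ T} {g : κ.out → Bool} {f : T → Bool} :
    f ∈ Dg em g ↔ ∃ a, f (em a) = !g a := by
  simp only [Dg, mem_iUnion]
  constructor
  · rintro ⟨a, ha⟩
    exact ⟨a, ha (em a) (!g a) (by simp [single])⟩
  · rintro ⟨a, ha⟩
    refine ⟨a, fun x b hb => ?_⟩
    simp only [single] at hb
    split at hb
    · rename_i hx; cases hb; rw [hx, ha]
    · exact absurd hb (by simp)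

theorem Dg_isOpen (hκ : ℵ₀ ≤ κ) (em : κ.out ↪ T) (g : κ.out → Bool) :
    @IsOpen _ (kTop κ T) (Dg em g) := by
  letI := kTop κ T
  refine isOpen_iUnion fun a => ?_
  exact TopologicalSpace.GenerateOpen.basic _ ⟨_, single_mem_Fn hκ em a (!g a), rfl⟩

theorem Dg_dense (hreg : κ.IsRegular) (em : κ.out ↪ T) (g : κ.out → Bool) :
    @Dense _ (kTop κ T) (Dg em g) := by
  classical
  letI := kTop κ T
  rw [dense_iff_inter_open]
  intro U hU ⟨f, hf⟩
  obtain ⟨p, hp, hfp, hpU⟩ := (isOpen_kTop_iff hreg.aleph0_le).1 hU f hf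
  have ha : ∃ a, p (em a) = none := by
    by_contra hc
    push_neg at hc
    have : κ ≤ #{x | p x ≠ none} := by
      rw [← mk_out κ]
      exact ⟨⟨fun a => ⟨em a, hc a⟩, fun a1 a2 h =>
        em.injective (congrArg Subtype.val h)⟩⟩
    exact absurd hp (not_lt.2 this)
  obtain ⟨a, ha⟩ := ha
  refine ⟨Function.update f (em a) (!g a), ?_, ?_⟩
  · apply hpU
    intro x b hb
    have hx : x ≠ em a := fun h => by rw [h, ha] at hb; exact absurd hb (by simp)
    rw [Function.update_of_ne hx]
    exact hfp x b hb
  · exact mem_Dg.2 ⟨a, by simp⟩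

theorem sInter_Dg (em : κ.out ↪ T) : ⋂₀ (range (Dg em)) = ∅ := by
  rw [eq_empty_iff_forall_notMem]
  intro f hf
  have : f ∈ Dg em (fun a => f (em a)) := hf _ ⟨_, rfl⟩
  obtain ⟨a, ha⟩ := mem_Dg.1 this
  simp at ha

end Upper

theorem baire_bounds' (κ θ : Cardinal.{u}) (hκ : κ.IsRegular) (hθ : κ ≤ θ) :
    Order.succ κ ≤ spaceBaire κ θ.out ∧ spaceBaire κ θ.out ≤ 2 ^ κ := by
  obtain ⟨em⟩ : Nonempty (κ.out ↪ θ.out) := by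
    rw [← Cardinal.le_def, mk_out, mk_out]
    exact hθ
  set S : Set Cardinal.{u} := {c | ∃ F : Set (Set (θ.out → Bool)), #F = c ∧
    (∀ U ∈ F, @IsOpen _ (kTop κ θ.out) U ∧ @Dense _ (kTop κ θ.out) U) ∧ ⋂₀ F = ∅} with hS
  have hmem : #(range (Dg em)) ∈ S := by
    refine ⟨range (Dg em), rfl, ?_, sInter_Dg em⟩
    rintro U ⟨g, rfl⟩
    exact ⟨Dg_isOpen hκ.aleph0_le em g, Dg_dense hκ em g⟩
  constructor
  · refine le_csInf ⟨_, hmem⟩ ?_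
    intro c hc
    obtain ⟨F, hFc, hdo, hFe⟩ := hc
    refine Order.succ_le_of_lt ?_
    by_contra hle
    push_neg at hle
    have hne : Nonempty θ.out := by
      rw [← mk_ne_zero_iff, mk_out]
      exact fun h => (aleph0_pos.trans_le (hκ.aleph0_le.trans hθ)).ne' h
    have := inter_nonempty hκ hne F (hFc ▸ hle) hdo
    rw [hFe] at this
    exact this.ne_empty rfl
  · refine (csInf_le' hmem).trans ?_
    have harr : #(κ.out → Bool) = 2 ^ κ := by
      rw [Cardinal.mk_arrow]
      simp [mk_out]
    exact harr ▸ mk_range_le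


/-- Fact 1: `κ⁺ ≤ 𝔫_κ^θ ≤ 2^κ`. -/
theorem baire_bounds (κ θ : Cardinal.{u}) (hκ : κ.IsRegular) (hθ : κ ≤ θ) :
    Order.succ κ ≤ nBaire κ θ ∧ nBaire κ θ ≤ 2 ^ κ :=
  baire_bounds' κ θ hκ hθ
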